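/- (Commutator estimate.) Let h be a Schwartz function on ℝ^d, let a : ℝ^d → ℝ be differentiable with bounded gradient, let E be a Banach space, and let g : ℝ^d → E be bounded and measurable. For q ∈ ℤ define K_q g(x) = 2^{qd} ∫_{ℝ^d} h(2^q(x − y)) (a(x) − a(y)) g(y) dy. Then for every p ∈ [1, ∞], ‖K_q g‖_{L^p(ℝ^d; E)} ≤ 2^{−q} · ‖∇a‖_{L^∞(ℝ^d)} · (∫_{ℝ^d} |z| |h(z)| dz) · ‖g‖_{L^p(ℝ^d; E)}. -/

import Mathlib

open MeasureTheory Function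
open scoped ENNReal

lemma abs_sub_le_of_ae_fderiv_bound {d : ℕ}
    (a : EuclideanSpace ℝ (Fin d) → ℝ) (ha : Differentiable ℝ a)
    {L : ℝ} (hL : ∀ x, ‖fderiv ℝ a x‖ ≤ L)
    {C : ℝ}
    (hae : ∀ᵐ x ∂(volume : Measure (EuclideanSpace ℝ (Fin d))), ‖fderiv ℝ a x‖ ≤ C) :
    ∀ x y, |a x - a y| ≤ C * ‖x - y‖ := by
  haveI : (ae (volume : Measure (EuclideanSpace ℝ (Fin d)))).NeBot := by
    exact ae_neBot.mpr (fun hzero => (isOpen_univ.measure_pos volume Set.univ_nonempty).ne' (by rw [hzero]; rfl))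
  obtain ⟨x₀, hx₀⟩ := hae.exists
  have hC : 0 ≤ C := le_trans (norm_nonneg _) hx₀
  have hm0 : MeasurableSet {w : EuclideanSpace ℝ (Fin d) | ‖fderiv ℝ a w‖ ≤ C} :=
    measurableSet_le ((measurable_fderiv ℝ a).norm) measurable_const
  have hnull : volume {w : EuclideanSpace ℝ (Fin d) | ¬ ‖fderiv ℝ a w‖ ≤ C} = 0 :=
    ae_iff.mp hae
  have key : ∀ u : EuclideanSpace ℝ (Fin d),
      ∀ᵐ w ∂(volume : Measure (EuclideanSpace ℝ (Fin d))),
        |a (w + u) - a w| ≤ C * ‖u‖ := by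
    intro u
    have hcont2 : Continuous fun z : ℝ × EuclideanSpace ℝ (Fin d) => z.2 + z.1 • u := by
      fun_prop
    have hprod : ∀ᵐ z ∂((volume : Measure ℝ).prod
        (volume : Measure (EuclideanSpace ℝ (Fin d)))),
        ‖fderiv ℝ a (z.2 + z.1 • u)‖ ≤ C := by
      rw [ae_iff]
      have hms : MeasurableSet
          {z : ℝ × EuclideanSpace ℝ (Fin d) | ¬ ‖fderiv ℝ a (z.2 + z.1 • u)‖ ≤ C} :=
        hcont2.measurable hm0.compl
      rw [Measure.measure_prod_null hms]
      filter_upwards with t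
      have : (Prod.mk t ⁻¹'
            {z : ℝ × EuclideanSpace ℝ (Fin d) | ¬ ‖fderiv ℝ a (z.2 + z.1 • u)‖ ≤ C})
          = (fun w : EuclideanSpace ℝ (Fin d) => w + t • u) ⁻¹'
            {w : EuclideanSpace ℝ (Fin d) | ¬ ‖fderiv ℝ a w‖ ≤ C} := rfl
      simp only [this]
      rw [measure_preimage_add_right]
      exact hnull
    have hswap : ∀ᵐ z ∂((volume : Measure (EuclideanSpace ℝ (Fin d))).prod
        (volume : Measure ℝ)), ‖fderiv ℝ a (z.1 + z.2 • u)‖ ≤ C := by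
      rw [← Measure.prod_swap, ae_map_iff measurable_swap.aemeasurable
        (by exact (hcont2.comp (continuous_snd.prodMk continuous_fst)).measurable hm0)]
      exact hprod
    have hae2 := Measure.ae_ae_of_ae_prod hswap
    filter_upwards [hae2] with w hw
    set φ' : ℝ → ℝ := fun t => fderiv ℝ a (w + t • u) u with hφ'
    have hderiv : ∀ t : ℝ, HasDerivAt (fun t => a (w + t • u)) (φ' t) t := by
      intro t
      have h1 : HasDerivAt (fun t : ℝ => w + t • u) u t := by
        simpa using ((hasDerivAt_id t).smul_const u).const_add w
      exact (ha (w + t • u)).hasFDerivAt.comp_hasDerivAt t h1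
    have hmeas : Measurable φ' := by
      have h2 : Measurable fun t : ℝ => fderiv ℝ a (w + t • u) :=
        (measurable_fderiv ℝ a).comp (by fun_prop)
      exact (ContinuousLinearMap.apply ℝ ℝ u).continuous.measurable.comp h2
    have hbd : ∀ t : ℝ, ‖φ' t‖ ≤ L * ‖u‖ := by
      intro t
      calc ‖φ' t‖ ≤ ‖fderiv ℝ a (w + t • u)‖ * ‖u‖ := (fderiv ℝ a (w + t • u)).le_opNorm u
        _ ≤ L * ‖u‖ := mul_le_mul_of_nonneg_right (hL _) (norm_nonneg u)
    have hint : IntervalIntegrable φ' volume 0 1 :=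
      (intervalIntegrable_const (c := L * ‖u‖)).mono_fun hmeas.aestronglyMeasurable
        (Filter.Eventually.of_forall fun t => (hbd t).trans (le_abs_self _))
    have hFTC : ∫ t in (0:ℝ)..1, φ' t = a (w + u) - a w := by
      have := intervalIntegral.integral_eq_sub_of_hasDerivAt
        (f := fun t => a (w + t • u)) (fun t _ => hderiv t) hint
      simpa using this
    have hnorm : ‖∫ t in (0:ℝ)..1, φ' t‖ ≤ |∫ t in (0:ℝ)..1, C * ‖u‖| := by
      refine le_trans ?_ (le_abs_self _)
      apply intervalIntegral.norm_integral_le_of_norm_le zero_le_one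
      · filter_upwards [hw] with t ht _
        calc ‖φ' t‖ ≤ ‖fderiv ℝ a (w + t • u)‖ * ‖u‖ := (fderiv ℝ a (w + t • u)).le_opNorm u
          _ ≤ C * ‖u‖ := mul_le_mul_of_nonneg_right ht (norm_nonneg u)
      · exact intervalIntegrable_const
    rw [hFTC] at hnorm
    calc |a (w + u) - a w| ≤ |∫ t in (0:ℝ)..1, C * ‖u‖| := hnorm
      _ = C * ‖u‖ := by
          simp [abs_of_nonneg (mul_nonneg hC (norm_nonneg u))]
  intro x y
  by_contra hlt
  push_neg at hlt
  have hopen : IsOpen {w : EuclideanSpace ℝ (Fin d) |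
      C * ‖x - y‖ < |a (w + (x - y)) - a w|} := by
    apply isOpen_lt continuous_const
    exact ((ha.continuous.comp (continuous_id.add continuous_const)).sub ha.continuous).abs
  have hpos := hopen.measure_pos volume ⟨y, by simpa using hlt⟩
  have hzero : volume {w : EuclideanSpace ℝ (Fin d) |
      C * ‖x - y‖ < |a (w + (x - y)) - a w|} = 0 := by
    have := ae_iff.mp (key (x - y))
    simpa [not_le] using this
  rw [hzero] at hpos
  exact lt_irrefl _ hpos

lemma young_l1 {d : ℕ} (k : EuclideanSpace ℝ (Fin d) → ℝ≥0∞) (hk : Measurable k)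
    (G : EuclideanSpace ℝ (Fin d) → ℝ≥0∞) (hG : Measurable G) {r : ℝ} (hr : 1 ≤ r) :
    (∫⁻ x, (∫⁻ y, k (x - y) * G y) ^ r) ^ (1/r) ≤
      (∫⁻ z, k z) * (∫⁻ y, (G y) ^ r) ^ (1/r) := by
  set A := ∫⁻ z, k z with hA
  have hr0 : (0:ℝ) < r := lt_of_lt_of_le one_pos hr
  have hinv : 0 ≤ 1 - 1/r := by rw [sub_nonneg]; exact (div_le_one hr0).mpr hr
  have htrans' : ∀ y : EuclideanSpace ℝ (Fin d), ∫⁻ x, k (x - y) = A := fun y =>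
    lintegral_sub_right_eq_self k y
  have htrans : ∀ x : EuclideanSpace ℝ (Fin d), ∫⁻ y, k (x - y) = A := fun x =>
    (Measure.measurePreserving_sub_left volume x).lintegral_comp hk
  have hstep1 : ∀ x, (∫⁻ y, k (x - y) * G y) ^ r ≤
      A ^ (r - 1) * ∫⁻ y, k (x - y) * (G y) ^ r := by
    intro x
    have hmk : Measurable fun y => k (x - y) := hk.comp (measurable_const.sub measurable_id)
    rcases eq_or_lt_of_le hr with hr1 | hr1
    · rw [← hr1]
      simp [ENNReal.rpow_one]
    · have hq0 : (0:ℝ) < r - 1 := by linarith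
      have hconj : ((r / (r-1)) : ℝ).HolderConjugate r := by
        rw [Real.holderConjugate_iff]; constructor
        · rw [lt_div_iff₀ hq0]; linarith
        · field_simp; ring
      have hHolder := ENNReal.lintegral_mul_le_Lp_mul_Lq (volume)
        hconj (f := fun y => (k (x - y)) ^ (1 - 1/r)) (g := fun y => (k (x - y)) ^ (1/r) * G y)
        (by fun_prop) (by fun_prop)
      have heq : (∫⁻ y, k (x - y) * G y) =
          ∫⁻ y, ((fun y => (k (x - y)) ^ (1 - 1/r)) * (fun y => (k (x - y)) ^ (1/r) * G y)) y := by
        congr 1; funext y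
        simp only [Pi.mul_apply]
        rw [← mul_assoc, ← ENNReal.rpow_add_of_nonneg _ _ hinv (by positivity)]
        norm_num
      have h1 : (∫⁻ y, ((fun y => (k (x - y)) ^ (1 - 1/r)) y) ^ (r / (r-1))) = A := by
        rw [← htrans x]
        congr 1; funext y
        rw [← ENNReal.rpow_mul]
        rw [show (1 - 1/r) * (r/(r-1)) = 1 by field_simp, ENNReal.rpow_one]
      have h2 : (∫⁻ y, ((fun y => (k (x - y)) ^ (1/r) * G y) y) ^ r) =
          ∫⁻ y, k (x - y) * (G y) ^ r := by
        congr 1; funext y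
        rw [ENNReal.mul_rpow_of_nonneg _ _ hr0.le, ← ENNReal.rpow_mul,
          show (1/r) * r = 1 by field_simp, ENNReal.rpow_one]
      rw [heq] at *
      have hmain : (∫⁻ y, ((fun y => (k (x - y)) ^ (1 - 1/r)) *
            (fun y => (k (x - y)) ^ (1/r) * G y)) y) ≤
          A ^ (1/(r/(r-1))) * (∫⁻ y, k (x - y) * (G y) ^ r) ^ (1/r) := by
        calc _ ≤ _ := hHolder
        _ = A ^ (1/(r/(r-1))) * (∫⁻ y, k (x - y) * (G y) ^ r) ^ (1/r) := by rw [h1, h2]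
      calc (∫⁻ y, ((fun y => (k (x - y)) ^ (1 - 1/r)) *
            (fun y => (k (x - y)) ^ (1/r) * G y)) y) ^ r
          ≤ (A ^ (1/(r/(r-1))) * (∫⁻ y, k (x - y) * (G y) ^ r) ^ (1/r)) ^ r :=
            ENNReal.rpow_le_rpow hmain hr0.le
        _ = A ^ (r - 1) * ∫⁻ y, k (x - y) * (G y) ^ r := by
            rw [ENNReal.mul_rpow_of_nonneg _ _ hr0.le, ← ENNReal.rpow_mul, ← ENNReal.rpow_mul,
              show (1/(r/(r-1))) * r = r - 1 by rw [one_div_div]; exact div_mul_cancel₀ _ hr0.ne',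
              show (1/r) * r = 1 by field_simp, ENNReal.rpow_one]
  -- integrate in x and swap
  have hunc : Measurable (uncurry fun x y =>
      k (x - y) * (G y) ^ r) :=
    ((hk.comp (measurable_fst.sub measurable_snd)).mul
      ((hG.comp measurable_snd).pow_const r))
  have hswap : ∫⁻ x, ∫⁻ y, k (x - y) * (G y) ^ r = A * ∫⁻ y, (G y) ^ r := by
    rw [lintegral_lintegral_swap hunc.aemeasurable]
    have : ∀ y, ∫⁻ x, k (x - y) * (G y) ^ r = A * (G y) ^ r := by
      intro y
      rw [lintegral_mul_const _
        (show Measurable fun x : EuclideanSpace ℝ (Fin d) => k (x - y) by fun_prop),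
        htrans' y, mul_comm]
    simp_rw [this]
    rw [lintegral_const_mul _ (hG.pow_const r)]
  calc (∫⁻ x, (∫⁻ y, k (x - y) * G y) ^ r) ^ (1/r)
      ≤ (∫⁻ x, A ^ (r - 1) * ∫⁻ y, k (x - y) * (G y) ^ r) ^ (1/r) :=
        ENNReal.rpow_le_rpow (lintegral_mono hstep1) (by positivity)
    _ = (A ^ (r - 1) * (A * ∫⁻ y, (G y) ^ r)) ^ (1/r) := by
        rw [lintegral_const_mul _ (hunc.lintegral_prod_right), hswap]
    _ = A * (∫⁻ y, (G y) ^ r) ^ (1/r) := by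
        rw [← mul_assoc]
        have hAr : A ^ (r-1) * A = A ^ r := by
          calc A ^ (r-1) * A = A ^ (r-1) * A ^ (1:ℝ) := by rw [ENNReal.rpow_one]
            _ = A ^ (r-1+1) := (ENNReal.rpow_add_of_nonneg _ _ (by linarith) zero_le_one).symm
            _ = A ^ r := by ring_nf
        rw [hAr, ENNReal.mul_rpow_of_nonneg _ _ (by positivity), ← ENNReal.rpow_mul,
          show r * (1/r) = 1 by field_simp, ENNReal.rpow_one]



/-- commutator estimate: for `h` Schwartz, `a` differentiable with bounded
gradient, `E` Banach and `g : ℝ^d → E` bounded measurable, the commutator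
`K_q g(x) = 2^{qd} ∫ h(2^q(x-y)) (a(x) - a(y)) g(y) dy` satisfies, for every `p ∈ [1,∞]`,
`‖K_q g‖_{L^p(ℝ^d;E)} ≤ 2^{-q} ‖∇a‖_{L^∞} (∫ |z||h(z)| dz) ‖g‖_{L^p(ℝ^d;E)}`. -/
theorem commutator_estimate {d : ℕ} {E : Type*}
    [NormedAddCommGroup E] [NormedSpace ℝ E] [CompleteSpace E]
    (h : SchwartzMap (EuclideanSpace ℝ (Fin d)) ℝ)
    (a : EuclideanSpace ℝ (Fin d) → ℝ) (ha : Differentiable ℝ a)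
    (ha' : ∃ L : ℝ, ∀ x, ‖fderiv ℝ a x‖ ≤ L)
    (g : EuclideanSpace ℝ (Fin d) → E) (hg : StronglyMeasurable g)
    (hgb : ∃ M : ℝ, ∀ x, ‖g x‖ ≤ M)
    (q : ℤ) (p : ℝ≥0∞) (hp : 1 ≤ p) :
    eLpNorm
        (fun x => ((2:ℝ) ^ (q * (d : ℤ))) •
          ∫ y, (h ((2:ℝ) ^ q • (x - y)) * (a x - a y)) • g y)
        p volume ≤
      ENNReal.ofReal ((2:ℝ) ^ (-q)) *
        eLpNorm (fun x => fderiv ℝ a x) ∞ volume *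
        ENNReal.ofReal (∫ z, ‖z‖ * |h z|) *
        eLpNorm g p volume := by
  obtain ⟨L, hL⟩ := ha'
  obtain ⟨M, hM⟩ := hgb
  set Cenn := eLpNormEssSup (fun x => fderiv ℝ a x) (volume : Measure (EuclideanSpace ℝ (Fin d))) with hCenn
  have hCfin : Cenn ≠ ∞ :=
    (eLpNormEssSup_lt_top_of_ae_bound (C := L) (Filter.Eventually.of_forall hL)).ne
  set C := Cenn.toReal with hCdef
  have hC0 : 0 ≤ C := ENNReal.toReal_nonneg
  have hofC : ENNReal.ofReal C = Cenn := ENNReal.ofReal_toReal hCfin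
  have hae : ∀ᵐ x ∂(volume : Measure (EuclideanSpace ℝ (Fin d))), ‖fderiv ℝ a x‖ ≤ C := by
    filter_upwards [enorm_ae_le_eLpNormEssSup (fun x => fderiv ℝ a x) volume] with x hx
    have := ENNReal.toReal_mono hCfin hx
    simpa using this
  have hlip := abs_sub_le_of_ae_fderiv_bound a ha hL hae
  -- positive base
  have h2q : (0:ℝ) < (2:ℝ) ^ q := zpow_pos (by norm_num) q
  have h2qd : (0:ℝ) < (2:ℝ) ^ (q * (d:ℤ)) := zpow_pos (by norm_num) _
  -- the kernel
  set kR : EuclideanSpace ℝ (Fin d) → ℝ :=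
    fun z => (2:ℝ) ^ (q * (d:ℤ)) * (|h ((2:ℝ)^q • z)| * (C * ‖z‖)) with hkR
  have hkR0 : ∀ z, 0 ≤ kR z := fun z => by positivity
  set k : EuclideanSpace ℝ (Fin d) → ℝ≥0∞ := fun z => ENNReal.ofReal (kR z) with hk
  have hkcont : Continuous kR := by
    have := h.continuous
    fun_prop
  have hkmeas : Measurable k := ENNReal.measurable_ofReal.comp hkcont.measurable
  set G : EuclideanSpace ℝ (Fin d) → ℝ≥0∞ := fun y => (‖g y‖₊ : ℝ≥0∞) with hG
  have hGmeas : Measurable G := hg.enorm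
  -- pointwise bound
  have hpt : ∀ x, (‖((2:ℝ) ^ (q * (d:ℤ))) •
      ∫ y, (h ((2:ℝ)^q • (x - y)) * (a x - a y)) • g y‖₊ : ℝ≥0∞) ≤
      ∫⁻ y, k (x - y) * G y := by
    intro x
    calc (‖((2:ℝ) ^ (q * (d:ℤ))) • ∫ y, (h ((2:ℝ)^q • (x - y)) * (a x - a y)) • g y‖₊ : ℝ≥0∞)
        = (‖(2:ℝ) ^ (q * (d:ℤ))‖₊ : ℝ≥0∞) *
          ‖∫ y, (h ((2:ℝ)^q • (x - y)) * (a x - a y)) • g y‖₊ := by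
          rw [nnnorm_smul]; exact_mod_cast rfl
      _ ≤ (‖(2:ℝ) ^ (q * (d:ℤ))‖₊ : ℝ≥0∞) *
          ∫⁻ y, ‖(h ((2:ℝ)^q • (x - y)) * (a x - a y)) • g y‖₊ :=
          mul_le_mul_right (enorm_integral_le_lintegral_enorm _) _
      _ = ∫⁻ y, (‖(2:ℝ) ^ (q * (d:ℤ))‖₊ : ℝ≥0∞) *
          ‖(h ((2:ℝ)^q • (x - y)) * (a x - a y)) • g y‖₊ :=
          (lintegral_const_mul' _ _ ENNReal.coe_ne_top).symm
      _ ≤ ∫⁻ y, k (x - y) * G y := by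
          apply lintegral_mono
          intro y
          show (‖(2:ℝ) ^ (q * (d:ℤ))‖₊ : ℝ≥0∞) *
            ‖(h ((2:ℝ)^q • (x - y)) * (a x - a y)) • g y‖₊ ≤ k (x - y) * G y
          rw [nnnorm_smul, ENNReal.coe_mul, ← mul_assoc]
          apply mul_le_mul_left
          rw [← ENNReal.coe_mul, ← nnnorm_mul, ← enorm_eq_nnnorm, Real.enorm_eq_ofReal_abs]
          apply ENNReal.ofReal_le_ofReal
          rw [abs_mul, abs_mul]
          have h1 : |a x - a y| ≤ C * ‖x - y‖ := hlip x y
          have h2 : |(2:ℝ) ^ (q * (d:ℤ))| = (2:ℝ) ^ (q * (d:ℤ)) := abs_of_pos h2qd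
          rw [h2]
          calc (2:ℝ) ^ (q * (d:ℤ)) * (|h ((2:ℝ)^q • (x - y))| * |a x - a y|)
              ≤ (2:ℝ) ^ (q * (d:ℤ)) * (|h ((2:ℝ)^q • (x - y))| * (C * ‖x - y‖)) := by
                gcongr
            _ = kR (x - y) := rfl
  -- kernel integral value
  have hF : Integrable (fun z : EuclideanSpace ℝ (Fin d) => ‖z‖ ^ (1:ℕ) * ‖h z‖) volume :=
    h.integrable_pow_mul volume 1
  set I : ℝ := ∫ z : EuclideanSpace ℝ (Fin d), ‖z‖ * |h z| with hI
  have hIF : I = ∫ z : EuclideanSpace ℝ (Fin d), ‖z‖ ^ (1:ℕ) * ‖h z‖ := by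
    simp [hI, Real.norm_eq_abs]
  set c2 : ℝ := (2:ℝ) ^ (q * (d:ℤ)) * C * (2:ℝ) ^ (-q) with hc2
  have hkReq : kR = fun z => c2 *
      (‖(2:ℝ)^q • z‖ ^ (1:ℕ) * ‖h ((2:ℝ)^q • z)‖) := by
    funext z
    have hn : ‖(2:ℝ)^q • z‖ = (2:ℝ)^q * ‖z‖ := by
      rw [norm_smul, Real.norm_eq_abs, abs_of_pos h2q]
    rw [hn]
    simp only [hkR, hc2, pow_one, Real.norm_eq_abs, zpow_neg]
    field_simp
  have hkRint : Integrable kR volume := by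
    rw [hkReq]
    exact (((integrable_comp_smul_iff volume
      (fun z : EuclideanSpace ℝ (Fin d) => ‖z‖ ^ (1:ℕ) * ‖h z‖) h2q.ne').mpr hF).const_mul c2)
  have hintkR : ∫ z, kR z = (2:ℝ)^(-q) * C * I := by
    rw [hkReq]
    rw [integral_const_mul]
    rw [Measure.integral_comp_smul volume
      (fun z : EuclideanSpace ℝ (Fin d) => ‖z‖ ^ (1:ℕ) * ‖h z‖) ((2:ℝ)^q)]
    rw [smul_eq_mul, ← hIF]
    have : ((2:ℝ)^q) ^ Module.finrank ℝ (EuclideanSpace ℝ (Fin d)) = (2:ℝ) ^ (q * (d:ℤ)) := by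
      rw [finrank_euclideanSpace_fin, ← zpow_natCast ((2:ℝ)^q) d, ← zpow_mul]
    rw [this, abs_of_pos (by positivity)]
    rw [hc2]
    field_simp
  have hAval : (∫⁻ z, k z) =
      ENNReal.ofReal ((2:ℝ)^(-q)) * Cenn * ENNReal.ofReal I := by
    rw [hk]
    simp only []
    rw [← ofReal_integral_eq_lintegral_ofReal hkRint (Filter.Eventually.of_forall hkR0)]
    rw [hintkR, ENNReal.ofReal_mul (by positivity), ENNReal.ofReal_mul (by positivity), hofC]
  -- reduce RHS
  have hrhs : ENNReal.ofReal ((2:ℝ) ^ (-q)) *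
        eLpNorm (fun x => fderiv ℝ a x) ∞ volume *
        ENNReal.ofReal (∫ z, ‖z‖ * |h z|) *
        eLpNorm g p volume = (∫⁻ z, k z) * eLpNorm g p volume := by
    rw [hAval, eLpNorm_exponent_top, ← hCenn, ← hI]
  rw [hrhs]
  -- split on p
  rcases eq_or_ne p ∞ with hptop | hptop
  · subst hptop
    rw [eLpNorm_exponent_top, eLpNorm_exponent_top]
    have hSfin : eLpNormEssSup g volume ≠ ∞ :=
      (eLpNormEssSup_lt_top_of_ae_bound (C := M) (Filter.Eventually.of_forall hM)).ne
    refine essSup_le_of_ae_le _ ?_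
    filter_upwards with x
    calc (‖((2:ℝ) ^ (q * (d:ℤ))) • ∫ y, (h ((2:ℝ)^q • (x - y)) * (a x - a y)) • g y‖₊ : ℝ≥0∞)
        ≤ ∫⁻ y, k (x - y) * G y := hpt x
      _ ≤ ∫⁻ y, k (x - y) * eLpNormEssSup g volume := by
          apply lintegral_mono_ae
          filter_upwards [ae_le_eLpNormEssSup (f := g) (μ := volume)] with y hy
          exact mul_le_mul_right hy _
      _ = (∫⁻ y, k (x - y)) * eLpNormEssSup g volume := by
          rw [lintegral_mul_const _
            (show Measurable fun y : EuclideanSpace ℝ (Fin d) => k (x - y) by fun_prop)]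
      _ = (∫⁻ z, k z) * eLpNormEssSup g volume := by
          rw [(Measure.measurePreserving_sub_left volume x).lintegral_comp hkmeas]
  · have hp0 : p ≠ 0 := fun h0 => by simp [h0] at hp
    have hr1 : 1 ≤ p.toReal := by
      rw [← ENNReal.toReal_one]
      exact ENNReal.toReal_mono hptop hp
    have hr0 : (0:ℝ) < p.toReal := lt_of_lt_of_le one_pos hr1
    rw [eLpNorm_eq_lintegral_rpow_enorm_toReal hp0 hptop, eLpNorm_eq_lintegral_rpow_enorm_toReal hp0 hptop]
    calc (∫⁻ x, (‖((2:ℝ) ^ (q * (d:ℤ))) •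
          ∫ y, (h ((2:ℝ)^q • (x - y)) * (a x - a y)) • g y‖₊ : ℝ≥0∞) ^ p.toReal) ^ (1/p.toReal)
        ≤ (∫⁻ x, (∫⁻ y, k (x - y) * G y) ^ p.toReal) ^ (1/p.toReal) := by
          apply ENNReal.rpow_le_rpow _ (by positivity)
          apply lintegral_mono
          intro x
          exact ENNReal.rpow_le_rpow (hpt x) hr0.le
      _ ≤ (∫⁻ z, k z) * (∫⁻ y, (G y) ^ p.toReal) ^ (1/p.toReal) :=
          young_l1 k hkmeas G hGmeas hr1
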